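/- Let G be a k-uniform hypergraph with n vertices and energy E(G). Then the Estrada index satisfies EE(G) ≤ n − 1 + e^{E(G)}, and equality holds if and only if G has no edges (G is the edgeless hypergraph on n vertices). -/

import Mathlib

open scoped BigOperators

set_option linter.unusedSectionVars false

section Hyper

variable {V : Type*} [Fintype V] [DecidableEq V]

/-- The adjacency matrix of a hypergraph given by its edge set `E`:
the `(i,j)` entry, for `i ≠ j`, is the number of edges containing both `i` and `j`,
and the diagonal entries are `0`. -/
def adjMatrix (E : Finset (Finset V)) : Matrix V V ℝ :=
  fun i j => if i = j then 0 else ((E.filter fun e => i ∈ e ∧ j ∈ e).card : ℝ)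

theorem adjMatrix_isHermitian (E : Finset (Finset V)) :
    (adjMatrix E).IsHermitian := by
  unfold Matrix.IsHermitian
  ext i j
  simp only [Matrix.conjTranspose_apply, adjMatrix, star_trivial]
  rcases eq_or_ne i j with h | h
  · simp [h]
  · have hfilter : E.filter (fun e => j ∈ e ∧ i ∈ e) = E.filter (fun e => i ∈ e ∧ j ∈ e) :=
      Finset.filter_congr fun e _ => and_comm
    rw [if_neg (Ne.symm h), if_neg h, hfilter]

/-- The Estrada index of a hypergraph: `EE(G) = ∑ᵢ exp (λᵢ)`, the sum over the
eigenvalues (with multiplicity) of the adjacency matrix; equivalently `tr (exp A(G))`. -/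
noncomputable def estradaIndex (E : Finset (Finset V)) : ℝ :=
  ∑ i, Real.exp ((adjMatrix_isHermitian E).eigenvalues i)

/-- The energy of a hypergraph: `∑ᵢ |λᵢ|` over the adjacency eigenvalues. -/
noncomputable def energy (E : Finset (Finset V)) : ℝ :=
  ∑ i, |(adjMatrix_isHermitian E).eigenvalues i|

/-- The degree of a vertex: the number of edges containing it. -/
def degree (E : Finset (Finset V)) (v : V) : ℕ := (E.filter fun e => v ∈ e).card

end Hyper

/-- For a `k`-uniform hypergraph `G` with `n` vertices and energy `E(G)`,
`EE(G) ≤ n - 1 + e^{E(G)}`, with equality iff `G` is edgeless. -/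

private lemma exp_add_exp_le {a b : ℝ} (ha : 0 ≤ a) (hb : 0 ≤ b) :
    Real.exp a + Real.exp b ≤ 1 + Real.exp (a + b) := by
  have h1 : 1 ≤ Real.exp a := Real.one_le_exp ha
  have h2 : 1 ≤ Real.exp b := Real.one_le_exp hb
  have := Real.exp_add a b
  nlinarith

private lemma sum_exp_le {ι : Type*} (s : Finset ι) (f : ι → ℝ)
    (h : ∀ i ∈ s, 0 ≤ f i) :
    ∑ i ∈ s, Real.exp (f i) ≤ (s.card : ℝ) - 1 + Real.exp (∑ i ∈ s, f i) := by
  classical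
  induction s using Finset.cons_induction with
  | empty => simp
  | cons a s ha ih =>
    have hfa : 0 ≤ f a := h a (Finset.mem_cons_self a s)
    have hs : ∀ i ∈ s, 0 ≤ f i := fun i hi => h i (Finset.mem_cons.mpr (Or.inr hi))
    have hsum : 0 ≤ ∑ i ∈ s, f i := Finset.sum_nonneg hs
    have h1 := ih hs
    have h2 := exp_add_exp_le hfa hsum
    rw [Finset.sum_cons, Finset.sum_cons, Finset.card_cons]
    push_cast
    linarith

private lemma eigenvalues_zero_of_zero {m : Type*} [Fintype m] [DecidableEq m]
    {A : Matrix m m ℝ} (hA : A.IsHermitian) (h : A = 0) (i : m) :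
    hA.eigenvalues i = 0 := by
  subst h
  rw [hA.eigenvalues_eq i]
  simp

private lemma zero_of_eigenvalues_zero {m : Type*} [Fintype m] [DecidableEq m]
    {A : Matrix m m ℝ} (hA : A.IsHermitian) (h : ∀ i, hA.eigenvalues i = 0) :
    A = 0 := by
  have := hA.spectral_theorem
  rw [show (RCLike.ofReal ∘ hA.eigenvalues : m → ℝ) = fun _ => 0 by ext i; simp [h i],
    Matrix.diagonal_zero, map_zero] at this
  exact this

private lemma sum_eigenvalues_eq_trace {m : Type*} [Fintype m] [DecidableEq m]
    {A : Matrix m m ℝ} (hA : A.IsHermitian) :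
    ∑ i, hA.eigenvalues i = A.trace := by
  conv_rhs => rw [hA.spectral_theorem]
  rw [Unitary.conjStarAlgAut_apply, Matrix.trace_mul_cycle]
  rw [show (star (hA.eigenvectorUnitary : Matrix m m ℝ)) * (hA.eigenvectorUnitary : Matrix m m ℝ)
      = 1 from Unitary.coe_star_mul_self _, Matrix.one_mul, Matrix.trace_diagonal]
  simp

theorem stmt_8 (n k : ℕ) (hk : 2 ≤ k)
    (E : Finset (Finset (Fin n))) (hunif : ∀ e ∈ E, e.card = k) :
    estradaIndex E ≤ (n : ℝ) - 1 + Real.exp (energy E) ∧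
      (estradaIndex E = (n : ℝ) - 1 + Real.exp (energy E) ↔ E = ∅) := by
  classical
  set hA := adjMatrix_isHermitian E with hAdef
  set lam := hA.eigenvalues with hlam
  have habs : ∀ i, Real.exp (lam i) ≤ Real.exp |lam i| :=
    fun i => Real.exp_le_exp.mpr (le_abs_self _)
  have hcard : ((Finset.univ : Finset (Fin n)).card : ℝ) = n := by simp
  have hstep : ∑ i, Real.exp |lam i| ≤ (n : ℝ) - 1 + Real.exp (energy E) := by
    have := sum_exp_le (Finset.univ : Finset (Fin n)) (fun i => |lam i|)
      (fun i _ => abs_nonneg _)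
    rw [hcard] at this
    exact this
  have hle1 : estradaIndex E ≤ ∑ i, Real.exp |lam i| :=
    Finset.sum_le_sum fun i _ => habs i
  have hmain : estradaIndex E ≤ (n : ℝ) - 1 + Real.exp (energy E) := hle1.trans hstep
  refine ⟨hmain, ?_, ?_⟩
  · -- equality → E = ∅
    intro heq
    by_contra hne
    -- E nonempty ⇒ adjMatrix E ≠ 0 ⇒ some eigenvalue nonzero
    have hAne : adjMatrix E ≠ 0 := by
      obtain ⟨e, he⟩ := Finset.nonempty_iff_ne_empty.mpr hne
      have hcardk := hunif e he
      obtain ⟨i, hi⟩ := Finset.card_pos.mp (by omega : 0 < e.card)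
      obtain ⟨j, hj, hij⟩ : ∃ j ∈ e, j ≠ i := by
        have : 1 < e.card := by omega
        obtain ⟨j, hj, hij⟩ := Finset.exists_mem_ne this i
        exact ⟨j, hj, hij⟩
      intro hc
      have : adjMatrix E i j = 0 := by rw [hc]; rfl
      rw [adjMatrix, if_neg (Ne.symm hij)] at this
      have : (E.filter fun f => i ∈ f ∧ j ∈ f).card = 0 := by exact_mod_cast this
      rw [Finset.card_eq_zero] at this
      have : e ∈ E.filter fun f => i ∈ f ∧ j ∈ f := Finset.mem_filter.mpr ⟨he, hi, hj⟩
      simp_all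
    have hex : ∃ i, lam i ≠ 0 := by
      by_contra hc
      push_neg at hc
      exact hAne (zero_of_eigenvalues_zero hA hc)
    obtain ⟨i0, hi0⟩ := hex
    -- trace is 0, so there is a negative eigenvalue
    have htr : ∑ i, lam i = 0 := by
      rw [hlam, sum_eigenvalues_eq_trace hA]
      unfold Matrix.trace
      simp [Matrix.diag, adjMatrix]
    have hexneg : ∃ j, lam j < 0 := by
      by_contra hc
      push_neg at hc
      rcases lt_or_eq_of_le (hc i0) with hpos | h0
      · have : 0 < ∑ i, lam i :=
          Finset.sum_pos' (fun i _ => hc i) ⟨i0, Finset.mem_univ _, hpos⟩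
        linarith
      · exact hi0 h0.symm
    obtain ⟨j0, hj0⟩ := hexneg
    have hstrict : estradaIndex E < ∑ i, Real.exp |lam i| := by
      apply Finset.sum_lt_sum (fun i _ => habs i)
      exact ⟨j0, Finset.mem_univ _, Real.exp_lt_exp.mpr (by
        rw [abs_of_neg hj0]; linarith)⟩
    linarith [hstrict.trans_le hstep]
  · -- E = ∅ → equality
    intro hE
    subst hE
    have hzero : adjMatrix (∅ : Finset (Finset (Fin n))) = 0 := by
      ext i j
      rw [adjMatrix]
      split <;> simp
    have hlam0 : ∀ i, lam i = 0 := fun i => eigenvalues_zero_of_zero hA hzero i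
    have h1 : estradaIndex (∅ : Finset (Finset (Fin n))) = n := by
      unfold estradaIndex
      rw [show (adjMatrix_isHermitian (∅ : Finset (Finset (Fin n)))).eigenvalues = lam from rfl]
      simp [hlam0]
    have h2 : energy (∅ : Finset (Finset (Fin n))) = 0 := by
      unfold energy
      rw [show (adjMatrix_isHermitian (∅ : Finset (Finset (Fin n)))).eigenvalues = lam from rfl]
      simp [hlam0]
    rw [h1, h2, Real.exp_zero]
    ring
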